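/- For every n ≥ 1, the number of Ulam words of length n of the form 0^a 1 0^b (exactly one 1) equals G(n-1), where G is Gould's sequence. -/

import Mathlib

/-- Ulam words with fuel bounding the recursion depth (fuel ≥ length suffices). -/
def UlamN : ℕ → List Bool → Prop
  | 0, _ => False
  | n + 1, w =>
    w = [false] ∨ w = [true] ∨
      ∃! p : List Bool × List Bool,
        p.1 ≠ [] ∧ p.2 ≠ [] ∧ UlamN n p.1 ∧ UlamN n p.2 ∧ p.1 ≠ p.2 ∧ p.1 ++ p.2 = w

/-- A word over {0,1} (`false` = 0, `true` = 1) is Ulam. -/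
def IsUlam (w : List Bool) : Prop := UlamN w.length w

/-- The integer whose binary representation (most significant digit first) is `w`. -/
def binVal (w : List Bool) : ℕ := w.foldl (fun acc b => 2 * acc + b.toNat) 0

lemma not_ulamN_nil : ∀ j, ¬ UlamN j ([] : List Bool) := by
  intro j
  match j with
  | 0 => exact id
  | j + 1 =>
    rintro (h | h | ⟨p, ⟨h1, _, _, _, _, h6⟩, _⟩)
    · simp at h
    · simp at h
    · exact h1 (List.append_eq_nil_iff.mp h6).1

lemma ulamN_fuel_iff : ∀ (k : ℕ) (w : List Bool), w.length ≤ k →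
    ∀ m n, w.length ≤ m → w.length ≤ n → (UlamN m w ↔ UlamN n w) := by
  intro k
  induction k with
  | zero =>
    intro w hw m n _ _
    have : w = [] := List.length_eq_zero_iff.mp (Nat.le_zero.mp hw)
    subst this
    exact iff_of_false (not_ulamN_nil m) (not_ulamN_nil n)
  | succ k IH =>
    intro w hw m n hm hn
    rcases List.eq_nil_or_concat w with rfl | hne
    · exact iff_of_false (not_ulamN_nil m) (not_ulamN_nil n)
    · have hwpos : 1 ≤ w.length := by
        rcases hne with ⟨l, b, rfl⟩; simp
      obtain ⟨m, rfl⟩ : ∃ m', m = m' + 1 := ⟨m - 1, by omega⟩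
      obtain ⟨n, rfl⟩ : ∃ n', n = n' + 1 := ⟨n - 1, by omega⟩
      have step : ∀ m' n' : ℕ, w.length ≤ m' + 1 → w.length ≤ n' + 1 →
            ∀ p : List Bool × List Bool,
          (p.1 ≠ [] ∧ p.2 ≠ [] ∧ UlamN m' p.1 ∧ UlamN m' p.2 ∧ p.1 ≠ p.2 ∧ p.1 ++ p.2 = w) →
          (p.1 ≠ [] ∧ p.2 ≠ [] ∧ UlamN n' p.1 ∧ UlamN n' p.2 ∧ p.1 ≠ p.2 ∧ p.1 ++ p.2 = w) := by
        intro m' n' hm' hn' p ⟨h1, h2, h3, h4, h5, h6⟩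
        have hlen := congrArg List.length h6
        simp only [List.length_append] at hlen
        have e1 : 1 ≤ p.1.length := List.length_pos_iff.mpr h1
        have e2 : 1 ≤ p.2.length := List.length_pos_iff.mpr h2
        refine ⟨h1, h2, ?_, ?_, h5, h6⟩
        · exact (IH p.1 (by omega) m' n' (by omega) (by omega)).mp h3
        · exact (IH p.2 (by omega) m' n' (by omega) (by omega)).mp h4
      show (w = [false] ∨ w = [true] ∨ _) ↔ (w = [false] ∨ w = [true] ∨ _)
      refine or_congr Iff.rfl (or_congr Iff.rfl (existsUnique_congr ?_))
      intro p
      exact ⟨step m n hm hn p, step n m hn hm p⟩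

lemma ulamN_iff_isUlam (w : List Bool) (n : ℕ) (hn : w.length ≤ n) :
    UlamN n w ↔ IsUlam w :=
  ulamN_fuel_iff w.length w le_rfl n w.length hn le_rfl

/-- Unfolding of `IsUlam` for words of length ≥ 2. -/
lemma isUlam_iff_of_two_le (w : List Bool) (hw : 2 ≤ w.length) :
    IsUlam w ↔ ∃! p : List Bool × List Bool,
      p.1 ≠ [] ∧ p.2 ≠ [] ∧ IsUlam p.1 ∧ IsUlam p.2 ∧ p.1 ≠ p.2 ∧ p.1 ++ p.2 = w := by
  obtain ⟨k, hk⟩ : ∃ k, w.length = k + 1 := ⟨w.length - 1, by omega⟩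
  have h1 : w ≠ [false] := by intro h; rw [h] at hw; simp at hw
  have h2 : w ≠ [true] := by intro h; rw [h] at hw; simp at hw
  unfold IsUlam
  rw [hk]
  show (w = [false] ∨ w = [true] ∨ _) ↔ _
  rw [or_iff_right h1, or_iff_right h2]
  refine existsUnique_congr ?_
  intro p
  constructor <;> rintro ⟨g1, g2, g3, g4, g5, g6⟩ <;>
    · have hlen := congrArg List.length g6
      simp only [List.length_append] at hlen
      have e1 : 1 ≤ p.1.length := List.length_pos_iff.mpr g1
      have e2 : 1 ≤ p.2.length := List.length_pos_iff.mpr g2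
      refine ⟨g1, g2, ?_, ?_, g5, g6⟩
      · first
        | exact (ulamN_iff_isUlam p.1 k (by omega)).mp g3
        | exact (ulamN_iff_isUlam p.1 k (by omega)).mpr g3
      · first
        | exact (ulamN_iff_isUlam p.2 k (by omega)).mp g4
        | exact (ulamN_iff_isUlam p.2 k (by omega)).mpr g4

lemma isUlam_false : IsUlam [false] := Or.inl rfl

lemma isUlam_true : IsUlam [true] := Or.inr (Or.inl rfl)

lemma isUlam_replicate_false : ∀ k, IsUlam (List.replicate k false) ↔ k = 1 := by
  intro k
  induction k using Nat.strong_induction_on with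
  | _ k IH =>
    match k with
    | 0 => exact iff_of_false (not_ulamN_nil 0) (by omega)
    | 1 => exact iff_of_true isUlam_false rfl
    | k + 2 =>
      refine iff_of_false ?_ (by omega)
      rw [isUlam_iff_of_two_le _ (by simp)]
      rintro ⟨p, ⟨h1, h2, h3, h4, h5, h6⟩, -⟩
      have hm1 : ∀ b ∈ p.1, b = false := by
        intro b hb
        have : b ∈ List.replicate (k + 2) false := h6 ▸ List.mem_append_left _ hb
        exact List.eq_of_mem_replicate this
      have hm2 : ∀ b ∈ p.2, b = false := by
        intro b hb
        have : b ∈ List.replicate (k + 2) false := h6 ▸ List.mem_append_right _ hb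
        exact List.eq_of_mem_replicate this
      have e1 : p.1 = List.replicate p.1.length false := List.eq_replicate_length.mpr hm1
      have e2 : p.2 = List.replicate p.2.length false := List.eq_replicate_length.mpr hm2
      have hlen := congrArg List.length h6
      simp only [List.length_append, List.length_replicate] at hlen
      have l1 : 1 ≤ p.1.length := List.length_pos_iff.mpr h1
      have l2 : 1 ≤ p.2.length := List.length_pos_iff.mpr h2
      have u1 : p.1.length = 1 := (IH p.1.length (by omega)).mp (e1 ▸ h3)
      have u2 : p.2.length = 1 := (IH p.2.length (by omega)).mp (e2 ▸ h4)
      apply h5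
      rw [e1, e2, u1, u2]

/-- `0^a 1 0^b`. -/
def Zob (a b : ℕ) : List Bool := List.replicate a false ++ true :: List.replicate b false

lemma zob_length (a b : ℕ) : (Zob a b).length = a + b + 1 := by
  simp [Zob]; omega

lemma zob_count (a b : ℕ) : (Zob a b).count true = 1 := by
  simp [Zob, List.count_append, List.count_cons, List.count_replicate]

lemma zob_ne_false (a b : ℕ) : Zob a b ≠ [false] := by
  intro h
  have := zob_count a b
  rw [h] at this
  simp at this

lemma zob_inj {a b a' b' : ℕ} (h : Zob a b = Zob a' b') : a = a' := by
  by_contra hne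
  wlog hlt : a < a' generalizing a a' b b'
  · exact this h.symm (Ne.symm hne) (by omega)
  have : (Zob a b)[a]? = (Zob a' b')[a]? := by rw [h]
  rw [Zob, Zob] at this
  rw [List.getElem?_append_right (by simp)] at this
  rw [List.getElem?_append_left (by simp [hlt])] at this
  simp [List.getElem?_replicate, hlt] at this

lemma zob_nonempty (a b : ℕ) : Zob a b ≠ [] := by
  intro h
  have := congrArg List.length h
  rw [zob_length] at this
  simp at this

lemma zob_split (a b : ℕ) (p : List Bool × List Bool)
    (hc : p.1 ≠ [] ∧ p.2 ≠ [] ∧ IsUlam p.1 ∧ IsUlam p.2 ∧ p.1 ≠ p.2 ∧ p.1 ++ p.2 = Zob a b) :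
    (1 ≤ a ∧ IsUlam (Zob (a-1) b) ∧ p = ([false], Zob (a-1) b)) ∨
    (1 ≤ b ∧ IsUlam (Zob a (b-1)) ∧ p = (Zob a (b-1), [false])) := by
  obtain ⟨h1, h2, h3, h4, h5, h6⟩ := hc
  rw [Zob] at h6
  rcases List.append_eq_append_iff.mp h6 with ⟨a', ha1, ha2⟩ | ⟨c', hc1, hc2⟩
  · -- p.1 is a prefix of the replicate block
    have hm1 : ∀ x ∈ p.1, x = false := by
      intro x hx
      exact List.eq_of_mem_replicate (ha1 ▸ List.mem_append_left _ hx)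
    have e1 : p.1 = List.replicate p.1.length false := List.eq_replicate_length.mpr hm1
    have u1 : p.1.length = 1 := (isUlam_replicate_false p.1.length).mp (e1 ▸ h3)
    have ep1 : p.1 = [false] := by rw [e1, u1]; rfl
    have ha : 1 ≤ a := by
      have := congrArg List.length ha1
      simp only [List.length_replicate, List.length_append, u1] at this
      omega
    have ha' : a' = List.replicate (a - 1) false := by
      obtain ⟨a0, rfl⟩ : ∃ a0, a = a0 + 1 := ⟨a - 1, by omega⟩
      rw [List.replicate_succ, ep1] at ha1
      simpa using ha1.symm
    have ep2 : p.2 = Zob (a - 1) b := by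
      rw [ha2, ha', Zob]
    refine Or.inl ⟨ha, ep2 ▸ h4, ?_⟩
    exact Prod.ext ep1 ep2
  · -- p.1 contains the whole replicate block
    rcases List.cons_eq_append_iff.mp hc2 with ⟨rfl, hp2⟩ | ⟨a'', rfl, hrb⟩
    · -- c' = [], so p.1 = replicate a false
      have ep1' : p.1 = List.replicate a false := by simpa using hc1
      have u1 : a = 1 := (isUlam_replicate_false a).mp (ep1' ▸ h3)
      subst u1
      refine Or.inl ⟨le_refl 1, ?_, ?_⟩
      · show IsUlam (Zob 0 b)
        have : Zob 0 b = p.2 := by rw [Zob, hp2]; rfl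
        exact this ▸ h4
      · refine Prod.ext ?_ ?_
        · rw [ep1']; rfl
        · rw [hp2]; rfl
    · -- c' = true :: a'', p.2 is a suffix of replicate b false
      have hm2 : ∀ x ∈ p.2, x = false := by
        intro x hx
        exact List.eq_of_mem_replicate (hrb ▸ List.mem_append_right _ hx)
      have e2 : p.2 = List.replicate p.2.length false := List.eq_replicate_length.mpr hm2
      have u2 : p.2.length = 1 := (isUlam_replicate_false p.2.length).mp (e2 ▸ h4)
      have ep2 : p.2 = [false] := by rw [e2, u2]; rfl
      have hb : 1 ≤ b := by
        have := congrArg List.length hrb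
        simp only [List.length_replicate, List.length_append, u2] at this
        omega
      have ha'' : a'' = List.replicate (b - 1) false := by
        obtain ⟨b0, rfl⟩ : ∃ b0, b = b0 + 1 := ⟨b - 1, by omega⟩
        rw [List.replicate_succ', ep2] at hrb
        simpa using List.append_inj_left' hrb.symm (by rfl)
      have ep1 : p.1 = Zob a (b - 1) := by
        rw [hc1, ha'', Zob]
      exact Or.inr ⟨hb, ep1 ▸ h3, Prod.ext ep1 ep2⟩

lemma zob_cond_left (a b : ℕ) (ha : 1 ≤ a) (hu : IsUlam (Zob (a-1) b)) :
    ([false] : List Bool) ≠ [] ∧ Zob (a-1) b ≠ [] ∧ IsUlam [false] ∧ IsUlam (Zob (a-1) b) ∧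
      ([false] : List Bool) ≠ Zob (a-1) b ∧ [false] ++ Zob (a-1) b = Zob a b := by
  refine ⟨by simp, zob_nonempty _ _, isUlam_false, hu, fun h => zob_ne_false _ _ h.symm, ?_⟩
  obtain ⟨a0, rfl⟩ : ∃ a0, a = a0 + 1 := ⟨a - 1, by omega⟩
  rw [Zob, Zob, List.replicate_succ]
  rfl

lemma zob_cond_right (a b : ℕ) (hb : 1 ≤ b) (hu : IsUlam (Zob a (b-1))) :
    Zob a (b-1) ≠ [] ∧ ([false] : List Bool) ≠ [] ∧ IsUlam (Zob a (b-1)) ∧ IsUlam [false] ∧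
      Zob a (b-1) ≠ [false] ∧ Zob a (b-1) ++ [false] = Zob a b := by
  refine ⟨zob_nonempty _ _, by simp, hu, isUlam_false, zob_ne_false _ _, ?_⟩
  obtain ⟨b0, rfl⟩ : ∃ b0, b = b0 + 1 := ⟨b - 1, by omega⟩
  rw [Zob, Zob, List.replicate_succ' (n := b0)]
  simp

lemma isUlam_zob : ∀ n a b, a + b = n → (IsUlam (Zob a b) ↔ Nat.choose n a % 2 = 1) := by
  intro n
  induction n using Nat.strong_induction_on with
  | _ n IH =>
    intro a b hab
    match n, hab with
    | 0, hab =>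
      obtain ⟨rfl, rfl⟩ : a = 0 ∧ b = 0 := by omega
      exact iff_of_true isUlam_true (by decide)
    | n + 1, hab =>
      have hXOR : IsUlam (Zob a b) ↔
          ((1 ≤ a ∧ Nat.choose n (a-1) % 2 = 1) ∧ ¬(1 ≤ b ∧ Nat.choose n a % 2 = 1)) ∨
          (¬(1 ≤ a ∧ Nat.choose n (a-1) % 2 = 1) ∧ (1 ≤ b ∧ Nat.choose n a % 2 = 1)) := by
        have iha : ∀ ha : 1 ≤ a, (IsUlam (Zob (a-1) b) ↔ Nat.choose n (a-1) % 2 = 1) :=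
          fun ha => IH n (by omega) (a-1) b (by omega)
        have ihb : ∀ hb : 1 ≤ b, (IsUlam (Zob a (b-1)) ↔ Nat.choose n a % 2 = 1) :=
          fun hb => IH n (by omega) a (b-1) (by omega)
        rw [isUlam_iff_of_two_le _ (by rw [zob_length]; omega)]
        constructor
        · rintro ⟨p, hp, huniq⟩
          have hd := zob_split a b p hp
          have hnot : ¬((1 ≤ a ∧ IsUlam (Zob (a-1) b)) ∧ (1 ≤ b ∧ IsUlam (Zob a (b-1)))) := by
            rintro ⟨⟨ha, hua⟩, ⟨hb, hub⟩⟩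
            have e1 := huniq (([false], Zob (a-1) b) : List Bool × List Bool)
              (zob_cond_left a b ha hua)
            have e2 := huniq ((Zob a (b-1), [false]) : List Bool × List Bool)
              (zob_cond_right a b hb hub)
            have e3 := e1.trans e2.symm
            have : Zob (a-1) b = [false] := congrArg Prod.snd e3
            exact zob_ne_false _ _ this
          rcases hd with ⟨ha, hua, -⟩ | ⟨hb, hub, -⟩
          · left
            refine ⟨⟨ha, (iha ha).mp hua⟩, ?_⟩
            rintro ⟨hb, hyb⟩
            exact hnot ⟨⟨ha, hua⟩, ⟨hb, (ihb hb).mpr hyb⟩⟩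
          · right
            refine ⟨?_, ⟨hb, (ihb hb).mp hub⟩⟩
            rintro ⟨ha, hya⟩
            exact hnot ⟨⟨ha, (iha ha).mpr hya⟩, ⟨hb, hub⟩⟩
        · rintro (⟨⟨ha, hya⟩, hnB⟩ | ⟨hnA, ⟨hb, hyb⟩⟩)
          · have hua := (iha ha).mpr hya
            refine ⟨([false], Zob (a-1) b), zob_cond_left a b ha hua, ?_⟩
            intro q hq
            rcases zob_split a b q hq with ⟨-, -, rfl⟩ | ⟨hb, hub, -⟩
            · rfl
            · exact absurd ⟨hb, (ihb hb).mp hub⟩ hnB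
          · have hub := (ihb hb).mpr hyb
            refine ⟨(Zob a (b-1), [false]), zob_cond_right a b hb hub, ?_⟩
            intro q hq
            rcases zob_split a b q hq with ⟨ha, hua, -⟩ | ⟨-, -, rfl⟩
            · exact absurd ⟨ha, (iha ha).mp hua⟩ hnA
            · rfl
      rw [hXOR]
      rcases Nat.eq_zero_or_pos a with rfl | ha
      · simp only [Nat.choose_zero_right]
        constructor
        · intro _; decide
        · intro _; right; exact ⟨by omega, ⟨by omega, by decide⟩⟩
      rcases Nat.eq_zero_or_pos b with rfl | hb
      · have hae : a = n + 1 := by omega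
        subst hae
        rw [Nat.choose_self, Nat.succ_sub_one, Nat.choose_self]
        constructor
        · intro _; decide
        · intro _; left; exact ⟨⟨by omega, by decide⟩, by omega⟩
      · obtain ⟨a0, rfl⟩ : ∃ a0, a = a0 + 1 := ⟨a - 1, by omega⟩
        rw [Nat.choose_succ_succ]
        simp only [Nat.succ_eq_add_one, Nat.add_sub_cancel]
        have h2 := Nat.add_mod (Nat.choose n a0) (Nat.choose n (a0 + 1)) 2
        constructor
        · rintro (⟨⟨-, hx⟩, hnB⟩ | ⟨hnA, ⟨-, hy⟩⟩)
          · have hy0 : Nat.choose n (a0+1) % 2 = 0 := by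
              rcases Nat.mod_two_eq_zero_or_one (Nat.choose n (a0+1)) with h | h
              · exact h
              · exact absurd ⟨hb, h⟩ hnB
            omega
          · have hx0 : Nat.choose n a0 % 2 = 0 := by
              rcases Nat.mod_two_eq_zero_or_one (Nat.choose n a0) with h | h
              · exact h
              · exact absurd ⟨by omega, h⟩ hnA
            omega
        · intro hsum
          rcases Nat.mod_two_eq_zero_or_one (Nat.choose n a0) with hx | hx <;>
            rcases Nat.mod_two_eq_zero_or_one (Nat.choose n (a0+1)) with hy | hy
          · omega
          · right; exact ⟨fun h => by omega, ⟨hb, hy⟩⟩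
          · left; exact ⟨⟨by omega, hx⟩, fun h => by omega⟩
          · omega

lemma lucas2 (n k : ℕ) :
    Nat.choose n k % 2 = (Nat.choose (n % 2) (k % 2) * Nat.choose (n / 2) (k / 2)) % 2 :=
  haveI : Fact (Nat.Prime 2) := ⟨Nat.prime_two⟩
  Choose.choose_modEq_choose_mod_mul_choose_div_nat (p := 2)

lemma sum_pair (t : ℕ) (g : ℕ → ℕ) :
    ∑ i ∈ Finset.range (2 * t), g i = ∑ j ∈ Finset.range t, (g (2 * j) + g (2 * j + 1)) := by
  induction t with
  | zero => simp
  | succ t ih =>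
    rw [Finset.sum_range_succ, ← ih, show 2 * (t + 1) = 2 * t + 1 + 1 by omega,
      Finset.sum_range_succ, Finset.sum_range_succ]
    omega

lemma sum_choose_parity : ∀ m : ℕ,
    ∑ a ∈ Finset.range (m + 1), Nat.choose m a % 2 = 2 ^ (Nat.digits 2 m).sum := by
  intro m
  induction m using Nat.strong_induction_on with
  | _ m IH =>
    rcases Nat.eq_zero_or_pos m with rfl | hm
    · simp
    have hdig : (Nat.digits 2 m).sum = m % 2 + (Nat.digits 2 (m / 2)).sum := by
      rw [Nat.digits_def' (by norm_num) hm]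
      simp
    have hq : m / 2 < m := Nat.div_lt_self hm (by norm_num)
    have IHq := IH (m / 2) hq
    rcases Nat.even_or_odd m with ⟨q, hqe⟩ | ⟨q, hqe⟩
    · -- m = 2 q
      have hq2 : m / 2 = q := by omega
      have hr2 : m % 2 = 0 := by omega
      have hqpos : 1 ≤ q := by omega
      rw [show m + 1 = 2 * q + 1 by omega, Finset.sum_range_succ, sum_pair]
      have heven : ∀ j, Nat.choose m (2 * j) % 2 = Nat.choose q j % 2 := by
        intro j
        rw [lucas2, hq2, hr2, show 2 * j % 2 = 0 by omega, show 2 * j / 2 = j by omega]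
        simp
      have hodd : ∀ j, Nat.choose m (2 * j + 1) % 2 = 0 := by
        intro j
        rw [lucas2, hr2, show (2 * j + 1) % 2 = 1 by omega]
        simp [Nat.choose]
      have hlast : Nat.choose m (2 * q) % 2 = Nat.choose q q % 2 := heven q
      calc ∑ j ∈ Finset.range q, (Nat.choose m (2 * j) % 2 + Nat.choose m (2 * j + 1) % 2)
            + Nat.choose m (2 * q) % 2
          = ∑ j ∈ Finset.range q, Nat.choose q j % 2 + Nat.choose q q % 2 := by
            rw [hlast]
            congr 1
            exact Finset.sum_congr rfl fun j _ => by rw [heven j, hodd j]; omega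
        _ = ∑ a ∈ Finset.range (q + 1), Nat.choose q a % 2 := (Finset.sum_range_succ _ q).symm
        _ = 2 ^ (Nat.digits 2 m).sum := by
            rw [hq2] at IHq
            rw [hdig, hr2, hq2, zero_add, IHq]
    · -- m = 2 q + 1
      have hq2 : m / 2 = q := by omega
      have hr2 : m % 2 = 1 := by omega
      rw [show m + 1 = 2 * (q + 1) by omega, sum_pair]
      have heven : ∀ j, Nat.choose m (2 * j) % 2 = Nat.choose q j % 2 := by
        intro j
        rw [lucas2, hq2, hr2, show 2 * j % 2 = 0 by omega, show 2 * j / 2 = j by omega]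
        simp
      have hodd : ∀ j, Nat.choose m (2 * j + 1) % 2 = Nat.choose q j % 2 := by
        intro j
        rw [lucas2, hq2, hr2, show (2 * j + 1) % 2 = 1 by omega,
          show (2 * j + 1) / 2 = j by omega]
        simp
      calc ∑ j ∈ Finset.range (q + 1), (Nat.choose m (2 * j) % 2 + Nat.choose m (2 * j + 1) % 2)
          = ∑ j ∈ Finset.range (q + 1), 2 * (Nat.choose q j % 2) := by
            exact Finset.sum_congr rfl fun j _ => by rw [heven j, hodd j]; omega
        _ = 2 * ∑ j ∈ Finset.range (q + 1), Nat.choose q j % 2 := by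
            rw [Finset.mul_sum]
        _ = 2 ^ (Nat.digits 2 m).sum := by
            rw [hq2] at IHq
            rw [hdig, hr2, hq2, IHq, pow_add, pow_one]

lemma card_filter_choose (m : ℕ) :
    ((Finset.range (m + 1)).filter (fun a => Nat.choose m a % 2 = 1)).card =
      2 ^ (Nat.digits 2 m).sum := by
  rw [Finset.card_filter, ← sum_choose_parity m]
  refine Finset.sum_congr rfl fun a _ => ?_
  rcases Nat.mod_two_eq_zero_or_one (Nat.choose m a) with h | h <;> simp [h]

lemma count_one_zob : ∀ w : List Bool, w.count true = 1 → ∃ a b, w = Zob a b := by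
  intro w
  induction w with
  | nil => intro h; simp at h
  | cons x t ih =>
    intro h
    cases x with
    | true =>
      have ht : t.count true = 0 := by
        rw [List.count_cons] at h
        simpa using h
      have : ∀ y ∈ t, y = false := by
        intro y hy
        have := List.count_eq_zero.mp ht
        cases y
        · rfl
        · exact absurd hy this
      refine ⟨0, t.length, ?_⟩
      rw [Zob]
      simp only [List.replicate, List.nil_append]
      exact congrArg (true :: ·) (List.eq_replicate_length.mpr this)
    | false =>
      have ht : t.count true = 1 := by
        rw [List.count_cons] at h
        simpa using h
      obtain ⟨a, b, rfl⟩ := ih ht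
      exact ⟨a + 1, b, by rw [Zob, Zob, List.replicate_succ]; rfl⟩

theorem ulam_single_one_count (n : ℕ) (hn : 1 ≤ n) :
    {w : List Bool | w.length = n ∧ IsUlam w ∧ w.count true = 1}.ncard =
      2 ^ (Nat.digits 2 (n - 1)).sum := by
  set T : Finset ℕ := (Finset.range n).filter (fun a => Nat.choose (n - 1) a % 2 = 1) with hT
  have hset : {w : List Bool | w.length = n ∧ IsUlam w ∧ w.count true = 1} =
      ↑(T.image (fun a => Zob a (n - 1 - a))) := by
    ext w
    simp only [Set.mem_setOf_eq, Finset.coe_image, Set.mem_image, Finset.mem_coe,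
      Finset.mem_filter, Finset.mem_range, hT]
    constructor
    · rintro ⟨hlen, hu, hc⟩
      obtain ⟨a, b, rfl⟩ := count_one_zob w hc
      rw [zob_length] at hlen
      have hb : b = n - 1 - a := by omega
      refine ⟨a, ⟨by omega, ?_⟩, by rw [← hb]⟩
      exact (isUlam_zob (n - 1) a b (by omega)).mp hu |>.symm ▸
        ((isUlam_zob (n - 1) a b (by omega)).mp hu)
    · rintro ⟨a, ⟨han, hpar⟩, rfl⟩
      refine ⟨by rw [zob_length]; omega, ?_, zob_count _ _⟩
      exact (isUlam_zob (n - 1) a (n - 1 - a) (by omega)).mpr hpar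
  rw [hset, Set.ncard_coe_finset]
  rw [Finset.card_image_of_injOn (fun a _ a' _ h => zob_inj h)]
  have : n = (n - 1) + 1 := by omega
  rw [hT, this, Nat.add_sub_cancel]
  exact card_filter_choose (n - 1)
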